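/- Let k1 and k2 be positive integers and let n = gcd(k1, k2). Then there are exactly two matrices X in GL(2, ℤ) with all entries non-negative such that X applied to the column vector (n, n) equals the column vector (k1, k2): namely the unique such matrix X0 lying in SL(2, ℤ), and the matrix X0 · [[0, 1], [1, 0]]. -/

import Mathlib

lemma exists_unique_sl (a b : ℤ) (ha : 0 < a) (hb : 0 < b) (hab : IsCoprime a b) :
    ∃! X : Matrix (Fin 2) (Fin 2) ℤ,
      X.det = 1 ∧ (∀ i j, 0 ≤ X i j) ∧ X 0 0 + X 0 1 = a ∧ X 1 0 + X 1 1 = b := by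
  have hex : ∃ p r : ℤ, 1 ≤ p ∧ p ≤ a ∧ 0 ≤ r ∧ r ≤ b ∧ p * b - 1 = a * r := by
    obtain ⟨u, v, huv⟩ := hab
    refine ⟨(v - 1) % a + 1, ?_⟩
    have hem := Int.emod_nonneg (v - 1) ha.ne'
    have hem2 := Int.emod_lt_of_pos (v - 1) ha
    set p := (v - 1) % a + 1 with hpdef
    have hp1 : 1 ≤ p := by omega
    have hpa : p ≤ a := by omega
    have hc : p - v = a * (-((v - 1) / a)) := by
      rw [hpdef, Int.emod_def]; ring
    have hmod : a ∣ p * b - 1 := by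
      refine ⟨(-((v - 1) / a)) * b - u, ?_⟩
      have hp' : p = v + a * (-((v - 1) / a)) := by linarith
      rw [hp']; linear_combination huv
    obtain ⟨r, hr⟩ := hmod
    have hr0 : 0 ≤ r := by nlinarith
    have hrb : r ≤ b := by nlinarith
    exact ⟨r, hp1, hpa, hr0, hrb, hr⟩
  obtain ⟨p, r, hp1, hpa, hr0, hrb, hr⟩ := hex
  refine ⟨!![p, a - p; r, b - r], ⟨?_, ?_, ?_, ?_⟩, ?_⟩
  · simp [Matrix.det_fin_two_of]; linear_combination hr
  · intro i j; fin_cases i <;> fin_cases j <;> simp <;> omega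
  · simp
  · simp
  · rintro Y ⟨hdet, hnn, hY1, hY2⟩
    have hdet' : Y 0 0 * Y 1 1 - Y 0 1 * Y 1 0 = 1 := by
      simpa [Matrix.det_fin_two] using hdet
    have key : Y 0 0 * b - Y 1 0 * a = 1 := by
      linear_combination hdet' - Y 0 0 * hY2 + Y 1 0 * hY1
    have key0 : p * b - r * a = 1 := by linear_combination hr
    have hn00 := hnn 0 0
    have hn01 := hnn 0 1
    have hn10 := hnn 1 0
    have hn11 := hnn 1 1
    have h00a : Y 0 0 ≤ a := by omega
    have h10b : Y 1 0 ≤ b := by omega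
    have hY001 : 1 ≤ Y 0 0 := by nlinarith
    have hd : a ∣ Y 0 0 - p :=
      hab.dvd_of_dvd_mul_right ⟨Y 1 0 - r, by linear_combination key - key0⟩
    obtain ⟨d, hdd⟩ := hd
    have hd0 : d = 0 := by nlinarith
    have h00p : Y 0 0 = p := by rw [hd0, mul_zero] at hdd; omega
    have h10r : Y 1 0 = r := by
      have h : Y 1 0 * a = r * a := by linear_combination key0 - key + b * h00p
      exact mul_right_cancel₀ ha.ne' h
    ext i j
    fin_cases i <;> fin_cases j <;> simp <;> omega

lemma swap_mul_swap : (!![0, 1; 1, 0] : Matrix (Fin 2) (Fin 2) ℤ) * !![0, 1; 1, 0] = 1 := by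
  ext i j; fin_cases i <;> fin_cases j <;>
    simp [Matrix.mul_apply, Fin.sum_univ_two, Matrix.one_apply]

lemma swap_det : (!![0, 1; 1, 0] : Matrix (Fin 2) (Fin 2) ℤ).det = -1 := by
  simp [Matrix.det_fin_two_of]

lemma mul_swap_apply (X : Matrix (Fin 2) (Fin 2) ℤ) (i : Fin 2) :
    (X * (!![0, 1; 1, 0] : Matrix (Fin 2) (Fin 2) ℤ)) i 0 = X i 1 ∧
      (X * (!![0, 1; 1, 0] : Matrix (Fin 2) (Fin 2) ℤ)) i 1 = X i 0 := by
  constructor <;> simp [Matrix.mul_apply, Fin.sum_univ_two]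

/-- For positive integers `k1, k2` with `n = gcd k1 k2`, the set of matrices
`X ∈ GL(2, ℤ)` (i.e. integer matrices with determinant `±1`) with non-negative entries
sending `(n, n)` to `(k1, k2)` consists of exactly two elements: the unique such matrix `X0`
lying in `SL(2, ℤ)`, and `X0 * [[0,1],[1,0]]`. -/
theorem gl2_nonneg_mulVec_gcd_eq_pair (k1 k2 : ℕ) (hk1 : 0 < k1) (hk2 : 0 < k2) :
    ∃! X0 : Matrix (Fin 2) (Fin 2) ℤ,
      X0.det = 1 ∧ (∀ i j, 0 ≤ X0 i j) ∧
      X0.mulVec ![(Nat.gcd k1 k2 : ℤ), (Nat.gcd k1 k2 : ℤ)] = ![(k1 : ℤ), (k2 : ℤ)] ∧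
      {X : Matrix (Fin 2) (Fin 2) ℤ |
          (X.det = 1 ∨ X.det = -1) ∧ (∀ i j, 0 ≤ X i j) ∧
          X.mulVec ![(Nat.gcd k1 k2 : ℤ), (Nat.gcd k1 k2 : ℤ)] = ![(k1 : ℤ), (k2 : ℤ)]}
        = {X0, X0 * !![0, 1; 1, 0]} := by
  set N := Nat.gcd k1 k2 with hN
  have hNpos : 0 < N := Nat.gcd_pos_of_pos_left k2 hk1
  set n : ℤ := (N : ℤ) with hn
  have hnpos : 0 < n := by rw [hn]; exact_mod_cast hNpos
  set a : ℤ := ((k1 / N : ℕ) : ℤ) with hadef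
  set b : ℤ := ((k2 / N : ℕ) : ℤ) with hbdef
  have hk1' : a * n = (k1 : ℤ) := by
    rw [hadef, hn]
    exact_mod_cast Nat.div_mul_cancel (Nat.gcd_dvd_left k1 k2)
  have hk2' : b * n = (k2 : ℤ) := by
    rw [hbdef, hn]
    exact_mod_cast Nat.div_mul_cancel (Nat.gcd_dvd_right k1 k2)
  have ha : 0 < a := by
    rcases lt_or_ge 0 a with h | h
    · exact h
    · exfalso; nlinarith [hk1', (by exact_mod_cast hk1 : (0:ℤ) < k1)]
  have hb : 0 < b := by
    rcases lt_or_ge 0 b with h | h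
    · exact h
    · exfalso; nlinarith [hk2', (by exact_mod_cast hk2 : (0:ℤ) < k2)]
  have hcop : IsCoprime a b := by
    rw [Int.isCoprime_iff_gcd_eq_one]
    have := Nat.coprime_div_gcd_div_gcd (m := k1) (n := k2) hNpos
    rw [hadef, hbdef, Int.gcd_natCast_natCast]; exact this
  have hmv : ∀ X : Matrix (Fin 2) (Fin 2) ℤ,
      X.mulVec ![n, n] = ![(k1 : ℤ), (k2 : ℤ)] ↔
        (X 0 0 + X 0 1 = a ∧ X 1 0 + X 1 1 = b) := by
    intro X
    rw [funext_iff, Fin.forall_fin_two]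
    simp only [Matrix.mulVec, dotProduct, Fin.sum_univ_two,
      Matrix.cons_val_zero, Matrix.cons_val_one, Matrix.head_cons]
    constructor
    · rintro ⟨h1, h2⟩
      constructor
      · apply mul_right_cancel₀ hnpos.ne'
        linarith [h1, hk1']
      · apply mul_right_cancel₀ hnpos.ne'
        linarith [h2, hk2']
    · rintro ⟨h1, h2⟩
      constructor
      · linear_combination n * h1 + hk1'
      · linear_combination n * h2 + hk2'
  obtain ⟨X0, ⟨hX0det, hX0nn, hX0a, hX0b⟩, huniq⟩ := exists_unique_sl a b ha hb hcop
  have hX0mv : X0.mulVec ![n, n] = ![(k1 : ℤ), (k2 : ℤ)] := (hmv X0).mpr ⟨hX0a, hX0b⟩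
  refine ⟨X0, ⟨hX0det, hX0nn, hX0mv, ?_⟩, ?_⟩
  · ext X
    simp only [Set.mem_setOf_eq, Set.mem_insert_iff, Set.mem_singleton_iff]
    constructor
    · rintro ⟨hd, hnn, hv⟩
      rw [hmv X] at hv
      rcases hd with h1 | h1
      · left; exact huniq X ⟨h1, hnn, hv.1, hv.2⟩
      · right
        have hXS : X * !![0, 1; 1, 0] = X0 := by
          apply huniq
          refine ⟨?_, ?_, ?_, ?_⟩
          · rw [Matrix.det_mul, h1, swap_det]; ring
          · intro i j
            fin_cases j <;> simp [Matrix.mul_apply, Fin.sum_univ_two] <;>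
              [exact hnn i 1; exact hnn i 0]
          · simp [Matrix.mul_apply, Fin.sum_univ_two]; linarith [hv.1]
          · simp [Matrix.mul_apply, Fin.sum_univ_two]; linarith [hv.2]
        calc X = X * (!![0, 1; 1, 0] * !![0, 1; 1, 0]) := by rw [swap_mul_swap, mul_one]
        _ = (X * !![0, 1; 1, 0]) * !![0, 1; 1, 0] := by rw [mul_assoc]
        _ = X0 * !![0, 1; 1, 0] := by rw [hXS]
    · rintro (rfl | rfl)
      · exact ⟨Or.inl hX0det, hX0nn, hX0mv⟩
      · refine ⟨Or.inr ?_, ?_, ?_⟩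
        · rw [Matrix.det_mul, hX0det, swap_det]; ring
        · intro i j
          fin_cases j <;> simp [Matrix.mul_apply, Fin.sum_univ_two] <;>
            [exact hX0nn i 1; exact hX0nn i 0]
        · rw [hmv]
          constructor <;> simp [Matrix.mul_apply, Fin.sum_univ_two] <;>
            [linarith [hX0a]; linarith [hX0b]]
  · rintro Y ⟨hd, hnn, hv, -⟩
    rw [hmv Y] at hv
    exact huniq Y ⟨hd, hnn, hv.1, hv.2⟩
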